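/- Let λ = (λ₁, …, λ_k) be a composition of n, let d = gcd(λ₁, …, λ_k), and let m, n ≥ 1. Then |N_λ^{(m)}| = L̄_λ(m) + L̄_{λ/2}(m/2) if d is even and m ≡ 2 (mod 4), and |N_λ^{(m)}| = L̄_λ(m) otherwise. -/

import Mathlib

/-- A word (list of letters) is primitive if it is not a nontrivial power `q^r` (`r > 1`)
of a strictly shorter word `q`. -/
def IsPrimitiveWord (s : List ℕ) : Prop :=
  ¬ ∃ (q : List ℕ) (r : ℕ), 1 < r ∧ q.length < s.length ∧ s = (List.replicate r q).flatten

/-- Necklaces: words up to cyclic rotation. -/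
abbrev Necklace : Type := Quotient (List.IsRotated.setoid ℕ)

/-- `o(s)`: the number of odd letters of the word `s`. -/
def oddCount (s : List ℕ) : ℕ := s.countP (fun x => x % 2 = 1)

/-- Membership condition for `N_λ`: `s` is a word of length `n` on the alphabet
`{0,…,2k-1}` with `a_{2t}(s) + a_{2t+1}(s) = λ_{t+1}` for all `0 ≤ t ≤ k-1`, and `s` is either
primitive or of the form `q²` with `q` primitive and `o(q)` odd. -/
def MemN (n k : ℕ) (l : List ℕ) (s : List ℕ) : Prop :=
  s.length = n ∧ (∀ c ∈ s, c < 2 * k) ∧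
    (∀ t < k, s.count (2 * t) + s.count (2 * t + 1) = l.getD t 0) ∧
    (IsPrimitiveWord s ∨ ∃ q : List ℕ, s = q ++ q ∧ IsPrimitiveWord q ∧ Odd (oddCount q))

/-- `|N_λ^{(m)}|`: the number of necklaces in `N_λ` with exactly `m` odd letters. -/
noncomputable def cardN (n k : ℕ) (l : List ℕ) (m : ℕ) : ℕ :=
  Nat.card {x : Necklace // ∃ s : List ℕ, Quotient.mk (List.IsRotated.setoid ℕ) s = x ∧
    MemN n k l s ∧ oddCount s = m}

/-- `L̄_λ(m)`: the number of primitive necklaces in `N_λ^{(m)}`. -/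
noncomputable def cardLbar (n k : ℕ) (l : List ℕ) (m : ℕ) : ℕ :=
  Nat.card {x : Necklace // ∃ s : List ℕ, Quotient.mk (List.IsRotated.setoid ℕ) s = x ∧
    MemN n k l s ∧ oddCount s = m ∧ IsPrimitiveWord s}

/-! ### Auxiliary lemmas -/

lemma oddCount_append (a b : List ℕ) : oddCount (a ++ b) = oddCount a + oddCount b :=
  List.countP_append

lemma rot_sq_le' (u v : List ℕ) :
    ((u ++ v) ++ (u ++ v)).rotate u.length
      = (u ++ v).rotate u.length ++ (u ++ v).rotate u.length := by
  have h1 : u.length ≤ (u ++ v).length := by simp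
  have h2 : u.length ≤ ((u ++ v) ++ (u ++ v)).length := by simp
  rw [List.rotate_eq_drop_append_take h2, List.rotate_eq_drop_append_take h1,
      List.drop_append_of_le_length h1, List.take_append_of_le_length h1,
      List.drop_left, List.take_left]
  simp [List.append_assoc]

lemma rotate_sq (q : List ℕ) (hq : q ≠ []) (j : ℕ) :
    (q ++ q).rotate j = q.rotate (j % q.length) ++ q.rotate (j % q.length) := by
  have hL : 0 < q.length := List.length_pos_iff_ne_nil.2 hq
  have key : ∀ a ≤ q.length, (q ++ q).rotate a = q.rotate a ++ q.rotate a := by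
    intro a ha
    have h := rot_sq_le' (q.take a) (q.drop a)
    rwa [List.take_append_drop, List.length_take, min_eq_left ha] at h
  have hlen : (q ++ q).length = 2 * q.length := by simp; ring
  have h2 : (q ++ q).rotate j = (q ++ q).rotate (j % (2 * q.length)) := by
    conv_lhs => rw [← List.rotate_mod]
    rw [hlen]
  have hb2 : j % (2 * q.length) < 2 * q.length := Nat.mod_lt _ (by omega)
  have hjL : j % q.length = (j % (2 * q.length)) % q.length :=
    (Nat.mod_mod_of_dvd j ⟨2, by ring⟩).symm
  rcases lt_or_ge (j % (2 * q.length)) q.length with h | h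
  · rw [h2, key _ (le_of_lt h), hjL, Nat.mod_eq_of_lt h]
  · obtain ⟨c, hc1, hc2⟩ : ∃ c, j % (2 * q.length) = q.length + c ∧ c < q.length :=
      ⟨j % (2 * q.length) - q.length, by omega, by omega⟩
    have hfix : (q ++ q).rotate q.length = q ++ q := by
      rw [List.rotate_eq_drop_append_take (by simp), List.drop_left, List.take_left]
    have heq : j % q.length = c := by
      rw [hjL, hc1, Nat.add_mod_left, Nat.mod_eq_of_lt hc2]
    rw [h2, hc1, ← List.rotate_rotate, hfix, key _ (le_of_lt hc2), heq]

lemma not_prim_sq (q : List ℕ) (hq : q ≠ []) : ¬ IsPrimitiveWord (q ++ q) := by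
  have hL : 0 < q.length := List.length_pos_iff_ne_nil.2 hq
  intro h
  exact h ⟨q, 2, one_lt_two, by simp; omega, by simp⟩

lemma sq_resp : ∀ (a b : List ℕ), a ~r b → (a ++ a) ~r (b ++ b) := by
  rintro a b ⟨j, hj⟩
  rcases eq_or_ne a [] with rfl | ha
  · simp at hj; subst hj; simp
  · exact ⟨j, by rw [rotate_sq a ha j, List.rotate_mod, hj]⟩

/-- The squaring map on necklaces. -/
def sqMap : Necklace → Necklace := Quotient.map (fun w => w ++ w) sq_resp

lemma sqMap_mk (q : List ℕ) :
    sqMap (Quotient.mk (List.IsRotated.setoid ℕ) q)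
      = Quotient.mk (List.IsRotated.setoid ℕ) (q ++ q) := rfl

lemma two_dvd_foldr_gcd (l : List ℕ) : 2 ∣ l.foldr Nat.gcd 0 ↔ ∀ x ∈ l, 2 ∣ x := by
  induction l with
  | nil => simp
  | cons a t ih => simp [Nat.dvd_gcd_iff, ih]

lemma getD_map_div (l : List ℕ) (t : ℕ) :
    (l.map (· / 2)).getD t 0 = l.getD t 0 / 2 := by
  rw [List.getD_eq_getElem?_getD, List.getD_eq_getElem?_getD, List.getElem?_map]
  cases l[t]? <;> simp

lemma necklaceSetFinite (p : List ℕ → Prop) (n M : ℕ)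
    (hp : ∀ s, p s → s.length = n ∧ ∀ c ∈ s, c < M) :
    {x : Necklace | ∃ s, Quotient.mk (List.IsRotated.setoid ℕ) s = x ∧ p s}.Finite := by
  have hw : {s : List ℕ | s.length = n ∧ ∀ c ∈ s, c < M}.Finite := by
    have h1 : {l : List (Fin (M+1)) | l.length = n}.Finite := List.finite_length_eq _ n
    refine (h1.image (List.map (Fin.val : Fin (M+1) → ℕ))).subset ?_
    rintro s ⟨hlen, hbd⟩
    refine ⟨s.map (fun c => ⟨c % (M+1), Nat.mod_lt _ (by omega)⟩), by simp [hlen], ?_⟩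
    rw [List.map_map]
    conv_rhs => rw [← List.map_id s]
    refine List.map_congr_left (fun a ha => ?_)
    have h := hbd a ha
    simp [Nat.mod_eq_of_lt (Nat.lt_succ_of_lt h)]
  refine (hw.image (Quotient.mk (List.IsRotated.setoid ℕ))).subset ?_
  rintro x ⟨s, rfl, hs⟩
  exact ⟨s, hp s hs, rfl⟩

/-- The set of necklaces in `N_λ^{(m)}` of the non-primitive (square) kind. -/
def PBset (n k m : ℕ) (l : List ℕ) : Set Necklace :=
  {x | ∃ s, Quotient.mk (List.IsRotated.setoid ℕ) s = x ∧ MemN n k l s ∧ oddCount s = m ∧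
    ∃ q, s = q ++ q ∧ IsPrimitiveWord q ∧ Odd (oddCount q)}

lemma card_split (n k m : ℕ) (l : List ℕ) (hn : 1 ≤ n) :
    cardN n k l m = cardLbar n k l m + (PBset n k m l).ncard := by
  classical
  have hNset : cardN n k l m = Set.ncard {x : Necklace |
      ∃ s, Quotient.mk (List.IsRotated.setoid ℕ) s = x ∧ MemN n k l s ∧ oddCount s = m} :=
    Nat.card_coe_set_eq _
  have hLset : cardLbar n k l m = Set.ncard {x : Necklace |
      ∃ s, Quotient.mk (List.IsRotated.setoid ℕ) s = x ∧ MemN n k l s ∧ oddCount s = m ∧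
        IsPrimitiveWord s} := Nat.card_coe_set_eq _
  rw [hNset, hLset]
  have hunion : {x : Necklace |
      ∃ s, Quotient.mk (List.IsRotated.setoid ℕ) s = x ∧ MemN n k l s ∧ oddCount s = m}
      = {x : Necklace | ∃ s, Quotient.mk (List.IsRotated.setoid ℕ) s = x ∧ MemN n k l s ∧
          oddCount s = m ∧ IsPrimitiveWord s} ∪ PBset n k m l := by
    ext x
    constructor
    · rintro ⟨s, rfl, hmem, hodd⟩
      rcases hmem.2.2.2 with hp | ⟨q, hq⟩
      · exact Or.inl ⟨s, rfl, hmem, hodd, hp⟩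
      · exact Or.inr ⟨s, rfl, hmem, hodd, q, hq⟩
    · rintro (⟨s, rfl, hmem, hodd, _⟩ | ⟨s, rfl, hmem, hodd, _⟩) <;> exact ⟨s, rfl, hmem, hodd⟩
  have hdisj : Disjoint {x : Necklace | ∃ s, Quotient.mk (List.IsRotated.setoid ℕ) s = x ∧
      MemN n k l s ∧ oddCount s = m ∧ IsPrimitiveWord s} (PBset n k m l) := by
    rw [Set.disjoint_left]
    rintro x ⟨s', hs', _, _, hprim'⟩ ⟨s, hs, hmem, _, q, rfl, _, _⟩
    have hqne : q ≠ [] := by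
      intro h
      have hlen := hmem.1
      subst h
      simp at hlen
      omega
    obtain ⟨j, hj⟩ : (q ++ q) ~r s' := Quotient.exact (hs.trans hs'.symm)
    rw [rotate_sq q hqne j] at hj
    have hne : q.rotate (j % q.length) ≠ [] := fun h => hqne (by
      have := congrArg List.length h
      simpa using this)
    exact not_prim_sq _ hne (hj ▸ hprim')
  have hfinL : {x : Necklace | ∃ s, Quotient.mk (List.IsRotated.setoid ℕ) s = x ∧
      MemN n k l s ∧ oddCount s = m ∧ IsPrimitiveWord s}.Finite :=
    necklaceSetFinite _ n (2 * k) (fun s hs => ⟨hs.1.1, hs.1.2.1⟩)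
  have hfinB : (PBset n k m l).Finite :=
    necklaceSetFinite _ n (2 * k) (fun s hs => ⟨hs.1.1, hs.1.2.1⟩)
  rw [hunion, Set.ncard_union_eq hdisj hfinL hfinB]

lemma pb_empty (n k m d : ℕ) (l : List ℕ) (hk : l.length = k) (hd : d = l.foldr Nat.gcd 0)
    (hne : ¬ (Even d ∧ m % 4 = 2)) : PBset n k m l = ∅ := by
  ext x
  simp only [PBset, Set.mem_setOf_eq, Set.mem_empty_iff_false, iff_false]
  rintro ⟨s, rfl, hmem, hodd, q, rfl, hqp, hqo⟩
  apply hne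
  have hoc : oddCount (q ++ q) = oddCount q + oddCount q := oddCount_append q q
  obtain ⟨c, hc⟩ := hqo
  constructor
  · rw [hd, Nat.even_iff]
    have h2 : 2 ∣ l.foldr Nat.gcd 0 := by
      rw [two_dvd_foldr_gcd]
      intro x hx
      obtain ⟨t, ht, hxt⟩ := List.mem_iff_getElem.1 hx
      have hcnt := hmem.2.2.1 t (by omega)
      rw [List.count_append, List.count_append, ← hxt, ← List.getD_eq_getElem l 0 ht] at *
      omega
    omega
  · omega

lemma pb_card (n k m : ℕ) (l : List ℕ) (hk : l.length = k) (hsum : l.sum = n) (hn : 1 ≤ n)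
    (hEnt : ∀ x ∈ l, 2 ∣ x) (hm4 : m % 4 = 2) :
    (PBset n k m l).ncard = cardLbar (n / 2) k (l.map (· / 2)) (m / 2) := by
  classical
  have h2n : 2 ∣ n := hsum ▸ List.dvd_sum hEnt
  have hA : cardLbar (n / 2) k (l.map (· / 2)) (m / 2) = Set.ncard {x : Necklace |
      ∃ s, Quotient.mk (List.IsRotated.setoid ℕ) s = x ∧ MemN (n / 2) k (l.map (· / 2)) s ∧
        oddCount s = m / 2 ∧ IsPrimitiveWord s} := Nat.card_coe_set_eq _
  set A : Set Necklace := {x : Necklace |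
      ∃ s, Quotient.mk (List.IsRotated.setoid ℕ) s = x ∧ MemN (n / 2) k (l.map (· / 2)) s ∧
        oddCount s = m / 2 ∧ IsPrimitiveWord s} with hAdef
  have hentD : ∀ t, t < k → 2 ∣ l.getD t 0 := by
    intro t ht
    have ht' : t < l.length := by omega
    rw [List.getD_eq_getElem l 0 ht']
    exact hEnt _ (List.getElem_mem ht')
  have himg : sqMap '' A = PBset n k m l := by
    ext x
    constructor
    · rintro ⟨y, ⟨q, rfl, hmem, hodd, hprim⟩, rfl⟩
      have hql : q.length = n / 2 := hmem.1
      refine ⟨q ++ q, (sqMap_mk q).symm, ⟨?_, ?_, ?_, ?_⟩, ?_, q, rfl, hprim, ?_⟩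
      · simp [hql]; omega
      · intro c hc
        rcases List.mem_append.1 hc with h | h <;> exact hmem.2.1 c h
      · intro t ht
        have hcnt := hmem.2.2.1 t ht
        rw [getD_map_div] at hcnt
        have := hentD t ht
        rw [List.count_append, List.count_append]
        omega
      · exact Or.inr ⟨q, rfl, hprim, by rw [hodd, Nat.odd_iff]; omega⟩
      · rw [oddCount_append, hodd]; omega
      · rw [hodd, Nat.odd_iff]; omega
    · rintro ⟨s, rfl, hmem, hodd, q, rfl, hqp, hqo⟩
      have hql : q.length + q.length = n := by simpa using hmem.1
      refine ⟨Quotient.mk (List.IsRotated.setoid ℕ) q,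
        ⟨q, rfl, ⟨by omega, ?_, ?_, Or.inl hqp⟩, ?_, hqp⟩, sqMap_mk q⟩
      · intro c hc; exact hmem.2.1 c (List.mem_append.2 (Or.inl hc))
      · intro t ht
        have hcnt := hmem.2.2.1 t ht
        rw [List.count_append, List.count_append] at hcnt
        rw [getD_map_div]
        omega
      · rw [oddCount_append] at hodd; omega
  have hinj : Set.InjOn sqMap A := by
    rintro x ⟨q, rfl, hmem, _, _⟩ y ⟨q', rfl, hmem', _, _⟩ hxy
    rw [sqMap_mk, sqMap_mk] at hxy
    obtain ⟨j, hj⟩ : (q ++ q) ~r (q' ++ q') := Quotient.exact hxy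
    have hqne : q ≠ [] := by
      intro h
      have := hmem.1
      subst h
      simp at this
      omega
    rw [rotate_sq q hqne j] at hj
    have hlen : (q.rotate (j % q.length)).length = q'.length := by
      simp [hmem.1, hmem'.1]
    exact Quotient.sound ⟨j % q.length, (List.append_inj hj hlen).1⟩
  rw [← himg, Set.ncard_image_of_injOn hinj, hA]

/-- For a composition `λ` of `n ≥ 1` with `k` parts, `d = gcd(λ₁,…,λ_k)` and `m ≥ 1`:
`|N_λ^{(m)}| = L̄_λ(m) + L̄_{λ/2}(m/2)` if `d` is even and `m ≡ 2 (mod 4)`, and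
`|N_λ^{(m)}| = L̄_λ(m)` otherwise. -/
theorem cardN_eq_cardLbar (n k m d : ℕ) (l : List ℕ)
    (hk : l.length = k) (hpos : ∀ x ∈ l, 0 < x) (hsum : l.sum = n)
    (hd : d = l.foldr Nat.gcd 0) (hn : 1 ≤ n) (hm : 1 ≤ m) :
    cardN n k l m =
      if Even d ∧ m % 4 = 2 then
        cardLbar n k l m + cardLbar (n / 2) k (l.map (· / 2)) (m / 2)
      else cardLbar n k l m := by
  split_ifs with h
  · obtain ⟨hEven, hm4⟩ := h
    have hEnt : ∀ x ∈ l, 2 ∣ x := by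
      rw [hd, Nat.even_iff] at hEven
      exact (two_dvd_foldr_gcd l).1 (by omega)
    rw [card_split n k m l hn, pb_card n k m l hk hsum hn hEnt hm4]
  · rw [card_split n k m l hn, pb_empty n k m d l hk hd h]
    simp
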